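/- For symmetric positive semidefinite matrices, the resolvent map is Lipschitz: for any z > 0 and any p×n real matrices X, H, letting Φ(X) = (XᵀX + z I_n)^{-1}, one has ‖Φ(X + H) − Φ(X)‖_F ≤ (2/z^{3/2})·‖H‖_F. -/

import Mathlib

open Matrix

/-- Frobenius norm (as a real number) of a matrix. -/
noncomputable def frob {p n : ℕ} (A : Matrix (Fin p) (Fin n) ℝ) : ℝ :=
  Real.sqrt (∑ i, ∑ j, (A i j) ^ 2)

namespace ResolventAux

lemma frob_nonneg {p n : ℕ} (A : Matrix (Fin p) (Fin n) ℝ) : 0 ≤ frob A :=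
  Real.sqrt_nonneg _

lemma sum_sq_nonneg {p n : ℕ} (A : Matrix (Fin p) (Fin n) ℝ) :
    0 ≤ ∑ i, ∑ j, (A i j) ^ 2 := by positivity

lemma frob_sq {p n : ℕ} (A : Matrix (Fin p) (Fin n) ℝ) :
    frob A ^ 2 = ∑ i, ∑ j, (A i j) ^ 2 :=
  Real.sq_sqrt (sum_sq_nonneg A)

lemma frob_transpose {p n : ℕ} (A : Matrix (Fin p) (Fin n) ℝ) : frob Aᵀ = frob A := by
  unfold frob
  rw [Finset.sum_comm]
  rfl

lemma frob_neg {p n : ℕ} (A : Matrix (Fin p) (Fin n) ℝ) : frob (-A) = frob A := by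
  unfold frob
  simp

lemma frob_add_le {p n : ℕ} (A B : Matrix (Fin p) (Fin n) ℝ) :
    frob (A + B) ≤ frob A + frob B := by
  have hcs : ∑ i, ∑ j, A i j * B i j ≤ frob A * frob B := by
    have h := Real.sum_mul_le_sqrt_mul_sqrt Finset.univ
      (fun x : Fin p × Fin n => A x.1 x.2) (fun x : Fin p × Fin n => B x.1 x.2)
    unfold frob
    simp only [Fintype.sum_prod_type] at h
    exact h
  have h1 : frob (A + B) ^ 2 ≤ (frob A + frob B) ^ 2 := by
    rw [frob_sq]
    have hexp : ∑ i, ∑ j, ((A + B) i j) ^ 2 =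
        (∑ i, ∑ j, (A i j) ^ 2) + 2 * (∑ i, ∑ j, A i j * B i j)
          + ∑ i, ∑ j, (B i j) ^ 2 := by
      rw [Finset.mul_sum, ← Finset.sum_add_distrib, ← Finset.sum_add_distrib]
      apply Finset.sum_congr rfl
      intro i _
      rw [Finset.mul_sum, ← Finset.sum_add_distrib, ← Finset.sum_add_distrib]
      apply Finset.sum_congr rfl
      intro j _
      simp [Matrix.add_apply]
      ring
    rw [hexp, ← frob_sq A, ← frob_sq B]
    nlinarith [hcs]
  have h2 : 0 ≤ frob A + frob B := add_nonneg (frob_nonneg A) (frob_nonneg B)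
  nlinarith [frob_nonneg (A + B)]

lemma dp_self_nonneg {n : ℕ} (v : Fin n → ℝ) : 0 ≤ v ⬝ᵥ v :=
  Finset.sum_nonneg fun i _ => mul_self_nonneg _

lemma dp_sq_le {n : ℕ} (u v : Fin n → ℝ) : (u ⬝ᵥ v) ^ 2 ≤ (u ⬝ᵥ u) * (v ⬝ᵥ v) := by
  have h := Finset.sum_mul_sq_le_sq_mul_sq Finset.univ u v
  simpa [dotProduct, pow_two] using h

/-- If `A` has operator norm bound `c` (in squared form), then
`frob (A * B) ≤ c * frob B`. -/
lemma frob_mul_le {p n m : ℕ} (A : Matrix (Fin p) (Fin n) ℝ) (c : ℝ) (hc : 0 ≤ c)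
    (h : ∀ v : Fin n → ℝ, (A *ᵥ v) ⬝ᵥ (A *ᵥ v) ≤ c ^ 2 * (v ⬝ᵥ v))
    (B : Matrix (Fin n) (Fin m) ℝ) :
    frob (A * B) ≤ c * frob B := by
  have key : ∀ j, ∑ i, ((A * B) i j) ^ 2 ≤ c ^ 2 * ∑ k, (B k j) ^ 2 := by
    intro j
    have h1 := h (fun k => B k j)
    simpa [dotProduct, Matrix.mulVec, Matrix.mul_apply, pow_two] using h1
  have hsum : ∑ i, ∑ j, ((A * B) i j) ^ 2 ≤ c ^ 2 * ∑ i, ∑ j, (B i j) ^ 2 :=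
    calc ∑ i, ∑ j, ((A * B) i j) ^ 2
        = ∑ j : Fin m, ∑ i : Fin p, ((A * B) i j) ^ 2 := Finset.sum_comm
      _ ≤ ∑ j : Fin m, c ^ 2 * ∑ k, (B k j) ^ 2 := Finset.sum_le_sum fun j _ => key j
      _ = c ^ 2 * ∑ j : Fin m, ∑ k, (B k j) ^ 2 := by rw [Finset.mul_sum]
      _ = c ^ 2 * ∑ i, ∑ j, (B i j) ^ 2 := by rw [Finset.sum_comm]
  unfold frob
  calc Real.sqrt (∑ i, ∑ j, ((A * B) i j) ^ 2)
      ≤ Real.sqrt (c ^ 2 * ∑ i, ∑ j, (B i j) ^ 2) := Real.sqrt_le_sqrt hsum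
    _ = c * Real.sqrt (∑ i, ∑ j, (B i j) ^ 2) := by
        rw [Real.sqrt_mul (sq_nonneg c), Real.sqrt_sq hc]

section QuadForm

variable {p n : ℕ} (z : ℝ) (X : Matrix (Fin p) (Fin n) ℝ)

/-- The regularized Gram matrix. -/
noncomputable def M : Matrix (Fin n) (Fin n) ℝ :=
  Xᵀ * X + z • (1 : Matrix (Fin n) (Fin n) ℝ)

lemma quad (u : Fin n → ℝ) :
    u ⬝ᵥ (M z X *ᵥ u) = (X *ᵥ u) ⬝ᵥ (X *ᵥ u) + z * (u ⬝ᵥ u) := by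
  unfold M
  rw [Matrix.add_mulVec, dotProduct_add, Matrix.smul_mulVec,
    Matrix.one_mulVec, ← Matrix.mulVec_mulVec, Matrix.dotProduct_mulVec,
    Matrix.vecMul_transpose]
  rw [dotProduct_smul]
  simp [smul_eq_mul]

lemma M_transpose : (M z X)ᵀ = M z X := by
  unfold M
  rw [Matrix.transpose_add, Matrix.transpose_mul, Matrix.transpose_transpose,
    Matrix.transpose_smul, Matrix.transpose_one]

lemma M_posDef (hz : 0 < z) : (M z X).PosDef := by
  refine Matrix.PosDef.of_dotProduct_mulVec_pos ?_ ?_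
  · ext i j
    simp only [Matrix.conjTranspose_apply, star_trivial]
    exact congrFun (congrFun (M_transpose z X) i) j
  · intro x hx
    have hst : star x = x := by
      funext i; simp
    rw [hst, quad]
    have h1 : 0 ≤ (X *ᵥ x) ⬝ᵥ (X *ᵥ x) := dp_self_nonneg _
    have h2 : 0 < x ⬝ᵥ x := by
      rcases lt_or_eq_of_le (dp_self_nonneg x) with h | h
      · exact h
      · exact absurd (dotProduct_self_eq_zero.mp h.symm) hx
    have := mul_pos hz h2
    linarith

lemma M_isUnit_det (hz : 0 < z) : IsUnit (M z X).det :=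
  isUnit_iff_ne_zero.mpr (M_posDef z X hz).det_pos.ne'

lemma M_mul_inv (hz : 0 < z) : M z X * (M z X)⁻¹ = 1 :=
  Matrix.mul_nonsing_inv _ (M_isUnit_det z X hz)

lemma inv_mul_M (hz : 0 < z) : (M z X)⁻¹ * M z X = 1 :=
  Matrix.nonsing_inv_mul _ (M_isUnit_det z X hz)

lemma inv_transpose (hz : 0 < z) : ((M z X)⁻¹)ᵀ = (M z X)⁻¹ := by
  rw [Matrix.transpose_nonsing_inv, M_transpose]

/-- Operator bound for `Φ = M⁻¹` : `‖Φ v‖² ≤ (z⁻¹)² ‖v‖²`. -/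
lemma opBound_inv (hz : 0 < z) (v : Fin n → ℝ) :
    ((M z X)⁻¹ *ᵥ v) ⬝ᵥ ((M z X)⁻¹ *ᵥ v) ≤ (z⁻¹) ^ 2 * (v ⬝ᵥ v) := by
  set u := (M z X)⁻¹ *ᵥ v with hu
  have hMu : M z X *ᵥ u = v := by
    rw [hu, Matrix.mulVec_mulVec, M_mul_inv z X hz, Matrix.one_mulVec]
  have hq := quad z X u
  rw [hMu] at hq
  set a := u ⬝ᵥ u
  set b := v ⬝ᵥ v
  have ha : 0 ≤ a := dp_self_nonneg u
  have hb : 0 ≤ b := dp_self_nonneg v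
  have h1 : z * a ≤ u ⬝ᵥ v := by
    have := dp_self_nonneg (X *ᵥ u); linarith
  have hcs : (u ⬝ᵥ v) ^ 2 ≤ a * b := dp_sq_le u v
  have hz2a : z ^ 2 * a ^ 2 ≤ a * b := by
    have hza : 0 ≤ z * a := mul_nonneg hz.le ha
    nlinarith
  rcases eq_or_lt_of_le ha with h0 | h0
  · rw [← h0]; positivity
  · have hfin : z ^ 2 * a ≤ b := by
      have := (mul_le_mul_iff_left₀ h0).mp (by nlinarith : (z ^ 2 * a) * a ≤ b * a)
      linarith
    rw [inv_pow, ← sub_nonneg]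
    have he : (z ^ 2)⁻¹ * b - a = (b - z ^ 2 * a) / z ^ 2 := by field_simp
    rw [he]
    have hnn : 0 ≤ b - z ^ 2 * a := by linarith
    positivity
  
/-- Operator bound for `Φ Xᵀ` : `‖Φ Xᵀ v‖² ≤ z⁻¹ ‖v‖²`. -/
lemma opBound_inv_mul_transpose (hz : 0 < z) (v : Fin p → ℝ) :
    (((M z X)⁻¹ * Xᵀ) *ᵥ v) ⬝ᵥ (((M z X)⁻¹ * Xᵀ) *ᵥ v)
      ≤ ((Real.sqrt z)⁻¹) ^ 2 * (v ⬝ᵥ v) := by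
  have hcsq : ((Real.sqrt z)⁻¹) ^ 2 = z⁻¹ := by
    rw [inv_pow, Real.sq_sqrt hz.le]
  rw [hcsq]
  set u := ((M z X)⁻¹ * Xᵀ) *ᵥ v with hu
  have hMu : M z X *ᵥ u = Xᵀ *ᵥ v := by
    rw [hu, Matrix.mulVec_mulVec, ← Matrix.mul_assoc, M_mul_inv z X hz, Matrix.one_mul]
  have hq := quad z X u
  rw [hMu] at hq
  have hdp : u ⬝ᵥ (Xᵀ *ᵥ v) = (X *ᵥ u) ⬝ᵥ v := by
    rw [Matrix.dotProduct_mulVec, Matrix.vecMul_transpose]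
  rw [hdp] at hq
  set a := u ⬝ᵥ u
  set b := v ⬝ᵥ v
  set s := (X *ᵥ u) ⬝ᵥ (X *ᵥ u) with hs
  have ha : 0 ≤ a := dp_self_nonneg u
  have hb : 0 ≤ b := dp_self_nonneg v
  have hsnn : 0 ≤ s := dp_self_nonneg _
  have hcs : ((X *ᵥ u) ⬝ᵥ v) ^ 2 ≤ s * b := dp_sq_le _ _
  -- (s + z a)^2 ≤ s * b
  have hkey : (s + z * a) ^ 2 ≤ s * b := by rw [← hq]; exact hcs
  have hza : 0 ≤ z * a := mul_nonneg hz.le ha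
  -- z a ≤ b
  have hzab : z * a ≤ b := by
    have h1 : (z * a) ^ 2 ≤ s * b := by nlinarith
    have h2 : s ^ 2 ≤ s * b := by nlinarith
    rcases eq_or_lt_of_le hsnn with h0 | h0
    · -- s = 0 : then (z a)^2 ≤ 0
      have : (z * a) ^ 2 ≤ 0 := by rw [← h0] at h1; linarith [h1]
      have : z * a = 0 := by nlinarith
      linarith
    · have hsb : s ≤ b := by
        have := (mul_le_mul_iff_right₀ h0).mp (by nlinarith : s * s ≤ s * b)
        linarith
      have h3 : (z * a) ^ 2 ≤ b ^ 2 := by nlinarith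
      nlinarith
  have : a ≤ z⁻¹ * b := by
    rw [← sub_nonneg]
    have : z⁻¹ * b - a = (b - z * a) / z := by field_simp
    rw [this]
    have : 0 ≤ b - z * a := by linarith
    positivity
  linarith

end QuadForm

end ResolventAux

open ResolventAux in
/-- The resolvent map `X ↦ (XᵀX + zI)⁻¹` is `(2/z^(3/2))`-Lipschitz
with respect to the Frobenius norm. -/
theorem resolvent_lipschitz_frobenius (p n : ℕ) (z : ℝ) (hz : 0 < z)
    (X H : Matrix (Fin p) (Fin n) ℝ) :
    frob (((X + H)ᵀ * (X + H) + z • (1 : Matrix (Fin n) (Fin n) ℝ))⁻¹ -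
        (Xᵀ * X + z • (1 : Matrix (Fin n) (Fin n) ℝ))⁻¹) ≤
      (2 / z ^ ((3 : ℝ) / 2)) * frob H := by
  set Y := X + H with hY
  set MX := M z X with hMX
  set MY := M z Y with hMY
  have hMXdef : MX = Xᵀ * X + z • (1 : Matrix (Fin n) (Fin n) ℝ) := rfl
  have hMYdef : MY = Yᵀ * Y + z • (1 : Matrix (Fin n) (Fin n) ℝ) := rfl
  rw [← hMYdef, ← hMXdef]
  set ΦX := MX⁻¹ with hΦX
  set ΦY := MY⁻¹ with hΦY
  -- resolvent identity
  have hdiff : MX - MY = -(Yᵀ * H + Hᵀ * X) := by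
    rw [hMXdef, hMYdef, hY]
    simp only [Matrix.transpose_add, Matrix.add_mul, Matrix.mul_add]
    abel
  have hident : ΦY - ΦX = ΦY * (MX - MY) * ΦX := by
    have h1 : ΦY * MX * ΦX = ΦY := by
      rw [Matrix.mul_assoc, M_mul_inv z X hz, Matrix.mul_one]
    have h2 : ΦY * MY * ΦX = ΦX := by
      rw [inv_mul_M z Y hz, Matrix.one_mul]
    rw [Matrix.mul_sub, Matrix.sub_mul, h1, h2]
  have hsplit : ΦY - ΦX = -((ΦY * Yᵀ) * (H * ΦX)) + -(ΦY * (Hᵀ * (X * ΦX))) := by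
    rw [hident, hdiff]
    simp only [Matrix.mul_neg, Matrix.neg_mul, Matrix.mul_add, Matrix.add_mul,
      Matrix.mul_assoc, neg_add]
  have hfr : frob (ΦY - ΦX) ≤
      frob ((ΦY * Yᵀ) * (H * ΦX)) + frob (ΦY * (Hᵀ * (X * ΦX))) := by
    rw [hsplit]
    refine (frob_add_le _ _).trans ?_
    rw [frob_neg, frob_neg]
  have hsz : 0 < Real.sqrt z := Real.sqrt_pos.mpr hz
  have hb1 : frob ((ΦY * Yᵀ) * (H * ΦX)) ≤ (Real.sqrt z)⁻¹ * (z⁻¹ * frob H) := by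
    have hin : frob (H * ΦX) ≤ z⁻¹ * frob H := by
      have ht : frob (H * ΦX) = frob (ΦX * Hᵀ) := by
        rw [← frob_transpose (H * ΦX), Matrix.transpose_mul, hΦX, hMX,
          inv_transpose z X hz]
      rw [ht]
      have h2 := frob_mul_le ΦX z⁻¹ (by positivity) (opBound_inv z X hz) Hᵀ
      rwa [frob_transpose] at h2
    have houter := frob_mul_le (ΦY * Yᵀ) (Real.sqrt z)⁻¹ (by positivity)
      (opBound_inv_mul_transpose z Y hz) (H * ΦX)
    exact houter.trans (mul_le_mul_of_nonneg_left hin (by positivity))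
  have hb2 : frob (ΦY * (Hᵀ * (X * ΦX))) ≤ z⁻¹ * ((Real.sqrt z)⁻¹ * frob H) := by
    have hin : frob (Hᵀ * (X * ΦX)) ≤ (Real.sqrt z)⁻¹ * frob H := by
      have ht : frob (Hᵀ * (X * ΦX)) = frob ((ΦX * Xᵀ) * H) := by
        rw [← frob_transpose (Hᵀ * (X * ΦX)), Matrix.transpose_mul, Matrix.transpose_mul,
          hΦX, hMX, inv_transpose z X hz, Matrix.transpose_transpose]
      rw [ht]
      exact frob_mul_le (ΦX * Xᵀ) (Real.sqrt z)⁻¹ (by positivity)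
        (opBound_inv_mul_transpose z X hz) H
    have houter := frob_mul_le ΦY z⁻¹ (by positivity) (opBound_inv z Y hz)
      (Hᵀ * (X * ΦX))
    exact houter.trans (mul_le_mul_of_nonneg_left hin (by positivity))
  have hz32 : z ^ ((3 : ℝ) / 2) = z * Real.sqrt z := by
    rw [show (3 : ℝ) / 2 = 1 + 1 / 2 by norm_num, Real.rpow_add hz, Real.rpow_one,
      ← Real.sqrt_eq_rpow]
  have hsum : (Real.sqrt z)⁻¹ * (z⁻¹ * frob H) + z⁻¹ * ((Real.sqrt z)⁻¹ * frob H)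
      = (2 / z ^ ((3 : ℝ) / 2)) * frob H := by
    rw [hz32]
    field_simp
    ring
  rw [← hsum]
  linarith [hfr, hb1, hb2]
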